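/- Let X and Y be Hermitian matrices (of possibly different finite dimensions) with tr X = tr Y = 1 and ‖X‖₁ ≥ ‖Y‖₁. Then there exists a completely positive trace-preserving linear map Λ such that Λ(X) = Y. -/

import Mathlib

open scoped BigOperators ComplexOrder

noncomputable section

/-- Bipartite matrices on `ℂ^{IA} ⊗ ℂ^{IB}`, indexed by pairs. -/
abbrev BMat (IA IB : Type) : Type := Matrix (IA × IB) (IA × IB) ℂ

/-- Partial transpose on the `B` system: `(X^{T_B})_{(i,j),(k,l)} = X_{(i,l),(k,j)}`. -/
def ptB {IA IB : Type} (X : BMat IA IB) : BMat IA IB :=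
  fun p q => X (p.1, q.2) (q.1, p.2)

/-- Trace norm `‖X‖₁ = tr √(X† X)`. -/
noncomputable def traceNorm {n : Type} [Fintype n] [DecidableEq n]
    (X : Matrix n n ℂ) : ℝ :=
  (((Matrix.posSemidef_conjTranspose_mul_self X).1.eigenvectorUnitary.1 *
      Matrix.diagonal (((↑) : ℝ → ℂ) ∘ (√·) ∘ (Matrix.posSemidef_conjTranspose_mul_self X).1.eigenvalues) *
      (star (Matrix.posSemidef_conjTranspose_mul_self X).1.eigenvectorUnitary : Matrix n n ℂ)).trace).re

/-- Operator norm (largest singular value). -/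
noncomputable def opNorm {n : Type} [Fintype n] [DecidableEq n] (X : Matrix n n ℂ) : ℝ :=
  ‖Matrix.toEuclideanCLM (𝕜 := ℂ) X‖

/-- Logarithmic negativity `E_N(X) = log₂ ‖X^{T_B}‖₁`. -/
noncomputable def EN {IA IB : Type} [Fintype IA] [Fintype IB] [DecidableEq IA] [DecidableEq IB]
    (X : BMat IA IB) : ℝ :=
  Real.logb 2 (traceNorm (ptB X))

/-- The extension `id_k ⊗ f` of a map on matrices, acting blockwise. -/
def extMap {I J : Type} (f : Matrix I I ℂ → Matrix J J ℂ) (k : ℕ)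
    (M : Matrix (Fin k × I) (Fin k × I) ℂ) : Matrix (Fin k × J) (Fin k × J) ℂ :=
  fun p q => f (fun i i' => M (p.1, i) (q.1, i')) p.2 q.2

/-- A map on matrices is completely positive if all its extensions `id_k ⊗ f`
map positive semidefinite matrices to positive semidefinite matrices. -/
def CompletelyPositive {I J : Type} [Fintype I] [Fintype J]
    (f : Matrix I I ℂ → Matrix J J ℂ) : Prop :=
  ∀ (k : ℕ) (M : Matrix (Fin k × I) (Fin k × I) ℂ), M.PosSemidef → (extMap f k M).PosSemidef

/-- A PPTq operation: a Hermitian-preserving, trace-preserving linear map `N`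
such that `T_{B'} ∘ N ∘ T_B` is completely positive. -/
def IsPPTq {IA IB JA JB : Type} [Fintype IA] [Fintype IB] [Fintype JA] [Fintype JB]
    (N : BMat IA IB →ₗ[ℂ] BMat JA JB) : Prop :=
  (∀ X : BMat IA IB, X.IsHermitian → (N X).IsHermitian) ∧
  (∀ X : BMat IA IB, (N X).trace = X.trace) ∧
  CompletelyPositive (fun X => ptB (N (ptB X)))

/-- A bipartite quasi-state: Hermitian with trace one. -/
def IsQuasiState {IA IB : Type} [Fintype IA] [Fintype IB] (ρ : BMat IA IB) : Prop :=
  ρ.IsHermitian ∧ ρ.trace = 1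

/-- A bipartite quantum state: positive semidefinite with trace one. -/
def IsState {IA IB : Type} [Fintype IA] [Fintype IB] (ρ : BMat IA IB) : Prop :=
  ρ.PosSemidef ∧ ρ.trace = 1

/-- The maximally entangled state `Φ^d = (1/d) ∑_{i,j} |ii⟩⟨jj|`. -/
noncomputable def MES (d : ℕ) : BMat (Fin d) (Fin d) :=
  fun p q => if p.1 = p.2 ∧ q.1 = q.2 then (1 : ℂ) / d else 0

/-- `n`-fold tensor (Kronecker) power, with all `A` factors grouped against all `B` factors. -/
def tensorPow {IA IB : Type} (ρ : BMat IA IB) (n : ℕ) :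
    BMat (Fin n → IA) (Fin n → IB) :=
  fun p q => ∏ i : Fin n, ρ (p.1 i, p.2 i) (q.1 i, q.2 i)

/-- Tensor (Kronecker) product of two bipartite matrices, grouping `A` systems together
and `B` systems together. -/
def tensorMul {IA IB JA JB : Type} (ρ : BMat IA IB) (σ : BMat JA JB) :
    BMat (IA × JA) (IB × JB) :=
  fun p q => ρ (p.1.1, p.2.1) (q.1.1, q.2.1) * σ (p.1.2, p.2.2) (q.1.2, q.2.2)

/-- One-shot exact distillable entanglement under PPTq operations. -/
noncomputable def oneShotDistill {IA IB : Type} [Fintype IA] [Fintype IB]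
    (ρ : BMat IA IB) : ℝ :=
  sSup { x : ℝ | ∃ d : ℕ, 0 < d ∧ x = Real.logb 2 d ∧
    ∃ Λ : BMat IA IB →ₗ[ℂ] BMat (Fin d) (Fin d), IsPPTq Λ ∧ Λ ρ = MES d }

/-- One-shot exact entanglement cost under PPTq operations. -/
noncomputable def oneShotCost {IA IB : Type} [Fintype IA] [Fintype IB]
    (ρ : BMat IA IB) : ℝ :=
  sInf { x : ℝ | ∃ d : ℕ, 0 < d ∧ x = Real.logb 2 d ∧
    ∃ Λ : BMat (Fin d) (Fin d) →ₗ[ℂ] BMat IA IB, IsPPTq Λ ∧ Λ (MES d) = ρ }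

/-- The one-shot distillation error for `n` copies towards `Φ^d`, optimized over PPTq operations. -/
noncomputable def distillErr {IA IB : Type} [Fintype IA] [Fintype IB]
    [DecidableEq IA] [DecidableEq IB] (ρ : BMat IA IB) (n d : ℕ) : ℝ :=
  sInf { e : ℝ | ∃ Λ : BMat (Fin n → IA) (Fin n → IB) →ₗ[ℂ] BMat (Fin d) (Fin d),
    IsPPTq Λ ∧ e = traceNorm (Λ (tensorPow ρ n) - MES d) }

/-- The one-shot dilution error for preparing `n` copies from `Φ^d`, optimized over PPTq operations. -/
noncomputable def costErr {IA IB : Type} [Fintype IA] [Fintype IB]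
    [DecidableEq IA] [DecidableEq IB] (ρ : BMat IA IB) (n d : ℕ) : ℝ :=
  sInf { e : ℝ | ∃ Λ : BMat (Fin d) (Fin d) →ₗ[ℂ] BMat (Fin n → IA) (Fin n → IB),
    IsPPTq Λ ∧ e = traceNorm (tensorPow ρ n - Λ (MES d)) }

/-- Distillable entanglement under PPTq operations (asymptotically vanishing error). -/
noncomputable def EDppt {IA IB : Type} [Fintype IA] [Fintype IB]
    [DecidableEq IA] [DecidableEq IB] (ρ : BMat IA IB) : ℝ :=
  sSup { r : ℝ | Filter.Tendsto (fun n : ℕ => distillErr ρ n (2 ^ ⌊r * n⌋₊))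
    Filter.atTop (nhds 0) }

/-- Entanglement cost under PPTq operations (asymptotically vanishing error). -/
noncomputable def ECppt {IA IB : Type} [Fintype IA] [Fintype IB]
    [DecidableEq IA] [DecidableEq IB] (ρ : BMat IA IB) : ℝ :=
  sInf { r : ℝ | Filter.Tendsto (fun n : ℕ => costErr ρ n (2 ^ ⌈r * n⌉₊))
    Filter.atTop (nhds 0) }

/-- Tempered negativity `N_τ(σ | ρ)`. -/
noncomputable def temperedNeg {IA IB : Type} [Fintype IA] [Fintype IB]
    [DecidableEq IA] [DecidableEq IB] (σ ρ : BMat IA IB) : ℝ :=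
  sSup { t : ℝ | ∃ X : Matrix (IA × IB) (IA × IB) ℂ, X.IsHermitian ∧
    opNorm (ptB X) ≤ 1 ∧ (X * ρ).trace = (opNorm X : ℂ) ∧ (X * σ).trace = (t : ℂ) }

/-- Asymptotic exact conversion rate under PPTq operations. -/
noncomputable def convRate {IA IB JA JB : Type} [Fintype IA] [Fintype IB]
    [Fintype JA] [Fintype JB]
    (ρ : BMat IA IB) (σ : BMat JA JB) : ℝ :=
  sSup { r : ℝ | 0 ≤ r ∧ ∀ᶠ n : ℕ in Filter.atTop,
    ∃ Λ : BMat (Fin n → IA) (Fin n → IB) →ₗ[ℂ]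
          BMat (Fin ⌊r * n⌋₊ → JA) (Fin ⌊r * n⌋₊ → JB),
      IsPPTq Λ ∧ Λ (tensorPow ρ n) = tensorPow σ ⌊r * n⌋₊ }

namespace CPTPAux

open Matrix

variable {n m k : ℕ}

/-- `U * diagonal g * Uᴴ` for a real diagonal `g`. -/
noncomputable def cD (U : Matrix (Fin n) (Fin n) ℂ) (g : Fin n → ℝ) :
    Matrix (Fin n) (Fin n) ℂ :=
  U * Matrix.diagonal (fun i => (g i : ℂ)) * Uᴴ

lemma cD_add (U : Matrix (Fin n) (Fin n) ℂ) (g h : Fin n → ℝ) :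
    cD U g + cD U h = cD U (g + h) := by
  unfold cD
  have hd : (fun i => (((g + h) i : ℝ) : ℂ)) =
      fun i => ((g i : ℝ) : ℂ) + ((h i : ℝ) : ℂ) := by
    funext i; show (((g i + h i : ℝ)) : ℂ) = _; push_cast; ring
  rw [hd, ← Matrix.diagonal_add, Matrix.mul_add, Matrix.add_mul]

lemma cD_smul (U : Matrix (Fin n) (Fin n) ℂ) (g : Fin n → ℝ) (r : ℝ) :
    (r : ℂ) • cD U g = cD U (r • g) := by
  unfold cD
  have hd : (fun i => (((r • g) i : ℝ) : ℂ)) = (r : ℂ) • fun i => ((g i : ℝ) : ℂ) := by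
    funext i; show (((r * g i : ℝ)) : ℂ) = _; push_cast; simp
  rw [hd, Matrix.diagonal_smul, mul_smul_comm, smul_mul_assoc]

lemma cD_mul (U : Matrix (Fin n) (Fin n) ℂ) (h1 : Uᴴ * U = 1) (g h : Fin n → ℝ) :
    cD U g * cD U h = cD U (fun i => g i * h i) := by
  unfold cD
  simp only [Matrix.mul_assoc]
  rw [← Matrix.mul_assoc Uᴴ U, h1, Matrix.one_mul,
    ← Matrix.mul_assoc (Matrix.diagonal _) (Matrix.diagonal _), Matrix.diagonal_mul_diagonal]
  have hd : (fun i => ((g i : ℝ) : ℂ) * ((h i : ℝ) : ℂ)) =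
      fun i => (((fun i => g i * h i) i : ℝ) : ℂ) := by
    funext i; push_cast; rfl
  rw [hd]

lemma cD_trace (U : Matrix (Fin n) (Fin n) ℂ) (h1 : Uᴴ * U = 1) (g : Fin n → ℝ) :
    (cD U g).trace = ((∑ i, g i : ℝ) : ℂ) := by
  unfold cD
  rw [Matrix.trace_mul_cycle, h1, Matrix.one_mul, Matrix.trace_diagonal]
  push_cast
  rfl

lemma cD_one (U : Matrix (Fin n) (Fin n) ℂ) (h2 : U * Uᴴ = 1) :
    cD U (fun _ => 1) = 1 := by
  unfold cD
  simp [h2]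

lemma cD_posSemidef (U : Matrix (Fin n) (Fin n) ℂ) (g : Fin n → ℝ) (hg : ∀ i, 0 ≤ g i) :
    (cD U g).PosSemidef := by
  exact (Matrix.posSemidef_diagonal_iff.mpr fun i => by
    simpa using Complex.zero_le_real.mpr (hg i)).mul_mul_conjTranspose_same U

lemma cD_sqrt (U : Matrix (Fin n) (Fin n) ℂ) (g : Fin n → ℝ) (hg : ∀ i, 0 ≤ g i) :
    cD U g = (U * Matrix.diagonal (fun i => (Real.sqrt (g i) : ℂ))) *
      (U * Matrix.diagonal (fun i => (Real.sqrt (g i) : ℂ)))ᴴ := by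
  rw [Matrix.conjTranspose_mul, Matrix.diagonal_conjTranspose]
  unfold cD
  simp only [Matrix.mul_assoc]
  rw [← Matrix.mul_assoc (Matrix.diagonal _) (Matrix.diagonal _), Matrix.diagonal_mul_diagonal]
  have hstar : star (fun i => ((Real.sqrt (g i) : ℝ) : ℂ)) =
      fun i => ((Real.sqrt (g i) : ℝ) : ℂ) := by
    funext i; simp [Complex.conj_ofReal]
  rw [hstar]
  have hd : (fun i => ((Real.sqrt (g i) : ℝ) : ℂ) * (fun i => ((Real.sqrt (g i) : ℝ) : ℂ)) i) =
      fun i => ((g i : ℝ) : ℂ) := by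
    funext i
    show ((Real.sqrt (g i) : ℝ) : ℂ) * ((Real.sqrt (g i) : ℝ) : ℂ) = _
    rw [← Complex.ofReal_mul, Real.mul_self_sqrt (hg i)]
  rw [hd]

lemma posSemidef_sum {ι : Type*} (s : Finset ι) (f : ι → Matrix (Fin n) (Fin n) ℂ)
    (h : ∀ i ∈ s, (f i).PosSemidef) : (∑ i ∈ s, f i).PosSemidef :=
  Finset.sum_induction f _ (fun _ _ ha hb => ha.add hb) Matrix.PosSemidef.zero h


lemma posSemidef_sum' {N : Type} [Fintype N] {ι : Type} (s : Finset ι)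
    (f : ι → Matrix N N ℂ) (h : ∀ i ∈ s, (f i).PosSemidef) : (∑ i ∈ s, f i).PosSemidef :=
  Finset.sum_induction f _ (fun _ _ ha hb => ha.add hb) Matrix.PosSemidef.zero h

/-- Rank-one-style Kraus operators realizing `M ↦ tr(CᴴCM) • (S Sᴴ)`. -/
noncomputable def kOp (S : Matrix (Fin k) (Fin k) ℂ) (C : Matrix (Fin m) (Fin m) ℂ)
    (α : Fin k × Fin m) : Matrix (Fin k) (Fin m) ℂ :=
  Matrix.of fun x a => S x α.1 * C α.2 a

lemma kOp_eq (S : Matrix (Fin k) (Fin k) ℂ) (C M : Matrix (Fin m) (Fin m) ℂ)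
    (α : Fin k × Fin m) :
    kOp S C α * M * (kOp S C α)ᴴ
      = ((C * M * Cᴴ) α.2 α.2) • Matrix.of (fun x y => S x α.1 * star (S y α.1)) := by
  obtain ⟨j, i⟩ := α
  ext x y
  simp only [kOp, Matrix.mul_apply, Matrix.smul_apply, Matrix.of_apply,
    Matrix.conjTranspose_apply, StarMul.star_mul, smul_eq_mul]
  simp only [Finset.sum_mul, Finset.mul_sum]
  refine Finset.sum_congr rfl fun s _ => Finset.sum_congr rfl fun r _ => by ring

lemma trace_smul_eq_kraus (C : Matrix (Fin m) (Fin m) ℂ) (S : Matrix (Fin k) (Fin k) ℂ)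
    (M : Matrix (Fin m) (Fin m) ℂ) :
    (Cᴴ * C * M).trace • (S * Sᴴ) = ∑ α : Fin k × Fin m, kOp S C α * M * (kOp S C α)ᴴ := by
  simp only [kOp_eq]
  rw [Fintype.sum_prod_type]
  have h1 : ∀ j : Fin k, ∑ i : Fin m,
      ((C * M * Cᴴ) i i) • Matrix.of (fun x y => S x j * star (S y j))
      = (C * M * Cᴴ).trace • Matrix.of (fun x y => S x j * star (S y j)) := by
    intro j
    rw [Matrix.trace, ← Finset.sum_smul]
    rfl
  simp only [h1]
  rw [← Finset.smul_sum]
  have h2 : ∑ j : Fin k, Matrix.of (fun x y => S x j * star (S y j)) = S * Sᴴ := by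
    ext x y
    simp only [Matrix.sum_apply, Matrix.of_apply, Matrix.mul_apply, Matrix.conjTranspose_apply]
  have h3 : (Cᴴ * C * M).trace = (C * M * Cᴴ).trace := by
    rw [Matrix.trace_mul_comm (C * M) Cᴴ, ← Matrix.mul_assoc]
  rw [h2, h3]


lemma kraus_CP {I J : Type} [Fintype I] [Fintype J] [DecidableEq I] {ι : Type} [Fintype ι]
    (K : ι → Matrix J I ℂ) :
    CompletelyPositive (fun (M : Matrix I I ℂ) => ∑ α, K α * M * (K α)ᴴ) := by
  intro kk M hM
  have single : ∀ (Kα : Matrix J I ℂ), extMap (fun (M : Matrix I I ℂ) => Kα * M * Kαᴴ) kk M =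
      (Matrix.of fun (p : Fin kk × J) (r : Fin kk × I) =>
          if p.1 = r.1 then Kα p.2 r.2 else 0) * M *
        (Matrix.of fun (p : Fin kk × J) (r : Fin kk × I) =>
          if p.1 = r.1 then Kα p.2 r.2 else 0)ᴴ := by
    intro Kα
    set L : Matrix (Fin kk × J) (Fin kk × I) ℂ :=
      Matrix.of fun (p : Fin kk × J) (r : Fin kk × I) =>
        if p.1 = r.1 then Kα p.2 r.2 else 0 with hL
    have hLM : L * M = Matrix.of fun p s => ∑ i, Kα p.2 i * M (p.1, i) s := by
      ext p s
      rw [Matrix.mul_apply, Fintype.sum_prod_type]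
      simp only [hL, Matrix.of_apply, ite_mul, zero_mul]
      rw [Finset.sum_comm]
      simp
    ext p q
    rw [Matrix.mul_apply, hLM, Fintype.sum_prod_type]
    simp only [Matrix.of_apply, Matrix.conjTranspose_apply, hL, apply_ite (star : ℂ → ℂ),
      star_zero, mul_ite, mul_zero]
    rw [Finset.sum_comm]
    simp only [Finset.sum_ite_eq, Finset.mem_univ, if_true]
    rfl
  have hrw : extMap (fun (M : Matrix I I ℂ) => ∑ α, K α * M * (K α)ᴴ) kk M =
      ∑ α, (Matrix.of fun (p : Fin kk × J) (r : Fin kk × I) =>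
          if p.1 = r.1 then K α p.2 r.2 else 0) * M *
        (Matrix.of fun (p : Fin kk × J) (r : Fin kk × I) =>
          if p.1 = r.1 then K α p.2 r.2 else 0)ᴴ := by
    ext p q
    rw [Matrix.sum_apply]
    have : extMap (fun (M : Matrix I I ℂ) => ∑ α, K α * M * (K α)ᴴ) kk M p q
        = ∑ α, extMap (fun (M : Matrix I I ℂ) => K α * M * (K α)ᴴ) kk M p q := by
      simp [extMap, Matrix.sum_apply]
    rw [this]
    exact Finset.sum_congr rfl fun α _ => by rw [single (K α)]
  rw [hrw]
  exact posSemidef_sum' _ _ fun α _ => hM.mul_mul_conjTranspose_same _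

lemma spectral {n : ℕ} (X : Matrix (Fin n) (Fin n) ℂ) (hX : X.IsHermitian) :
    X = cD (hX.eigenvectorUnitary : Matrix (Fin n) (Fin n) ℂ) hX.eigenvalues := by
  conv_lhs => rw [hX.spectral_theorem]
  rfl

lemma star_mul_self_eigenvectorUnitary {n : ℕ} {X : Matrix (Fin n) (Fin n) ℂ}
    (hX : X.IsHermitian) :
    ((hX.eigenvectorUnitary : Matrix (Fin n) (Fin n) ℂ))ᴴ *
      (hX.eigenvectorUnitary : Matrix (Fin n) (Fin n) ℂ) = 1 := by
  simpa [Matrix.star_eq_conjTranspose] using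
    Matrix.mem_unitaryGroup_iff'.mp hX.eigenvectorUnitary.2

lemma mul_star_self_eigenvectorUnitary {n : ℕ} {X : Matrix (Fin n) (Fin n) ℂ}
    (hX : X.IsHermitian) :
    (hX.eigenvectorUnitary : Matrix (Fin n) (Fin n) ℂ) *
      ((hX.eigenvectorUnitary : Matrix (Fin n) (Fin n) ℂ))ᴴ = 1 := by
  simpa [Matrix.star_eq_conjTranspose] using
    Matrix.mem_unitaryGroup_iff.mp hX.eigenvectorUnitary.2

lemma traceNorm_eq_sum_abs {n : ℕ} (X : Matrix (Fin n) (Fin n) ℂ) (hX : X.IsHermitian) :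
    traceNorm X = ∑ i, |hX.eigenvalues i| := by
  set U := (hX.eigenvectorUnitary : Matrix (Fin n) (Fin n) ℂ) with hU
  have h1 : Uᴴ * U = 1 := star_mul_self_eigenvectorUnitary hX
  have hXX := (Matrix.posSemidef_conjTranspose_mul_self X).1
  have hkey : cD U (fun i => |hX.eigenvalues i|) =
      (Matrix.posSemidef_conjTranspose_mul_self X).1.eigenvectorUnitary.1 *
      Matrix.diagonal (((↑) : ℝ → ℂ) ∘ (√·) ∘ (Matrix.posSemidef_conjTranspose_mul_self X).1.eigenvalues) *
      (star (Matrix.posSemidef_conjTranspose_mul_self X).1.eigenvectorUnitary : Matrix (Fin n) (Fin n) ℂ) := by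
    have e1 : (Matrix.posSemidef_conjTranspose_mul_self X).1.eigenvectorUnitary.1 *
      Matrix.diagonal (((↑) : ℝ → ℂ) ∘ (√·) ∘ (Matrix.posSemidef_conjTranspose_mul_self X).1.eigenvalues) *
      (star (Matrix.posSemidef_conjTranspose_mul_self X).1.eigenvectorUnitary : Matrix (Fin n) (Fin n) ℂ)
        = cfc Real.sqrt (Xᴴ * X) := by
      rw [hXX.cfc_eq]
      unfold Matrix.IsHermitian.cfc
      simp [Unitary.conjStarAlgAut_apply]
    have e2 : cD U (fun i => |hX.eigenvalues i|) = cfc (fun x : ℝ => |x|) X := by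
      rw [hX.cfc_eq]
      unfold Matrix.IsHermitian.cfc
      simp [Unitary.conjStarAlgAut_apply]
      rfl
    rw [e1, e2, hX.eq, ← pow_two, ← cfc_pow_id (R := ℝ) X 2 hX.isSelfAdjoint,
      ← cfc_comp Real.sqrt (fun x : ℝ => x ^ 2) X hX.isSelfAdjoint]
    exact cfc_congr fun x _ => (Real.sqrt_sq_eq_abs x).symm
  unfold traceNorm
  rw [← hkey, cD_trace U h1]
  simp

end CPTPAux

open Matrix CPTPAux

/-- For Hermitian matrices `X`, `Y` of trace one with
`‖X‖₁ ≥ ‖Y‖₁`, there exists a completely positive trace-preserving linear map `Λ`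
with `Λ X = Y`. -/
theorem exists_CPTP_map_of_traceNorm_le {m k : ℕ}
    (X : Matrix (Fin m) (Fin m) ℂ) (Y : Matrix (Fin k) (Fin k) ℂ)
    (hX : X.IsHermitian) (hY : Y.IsHermitian)
    (hXt : X.trace = 1) (hYt : Y.trace = 1)
    (h : traceNorm Y ≤ traceNorm X) :
    ∃ Λ : Matrix (Fin m) (Fin m) ℂ →ₗ[ℂ] Matrix (Fin k) (Fin k) ℂ,
      CompletelyPositive (fun M => Λ M) ∧ (∀ M, (Λ M).trace = M.trace) ∧ Λ X = Y := by
  classical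
  set U := (hX.eigenvectorUnitary : Matrix (Fin m) (Fin m) ℂ) with hUdef
  set V := (hY.eigenvectorUnitary : Matrix (Fin k) (Fin k) ℂ) with hVdef
  have hU1 : Uᴴ * U = 1 := star_mul_self_eigenvectorUnitary hX
  have hU2 : U * Uᴴ = 1 := mul_star_self_eigenvectorUnitary hX
  have hV1 : Vᴴ * V = 1 := star_mul_self_eigenvectorUnitary hY
  have hV2 : V * Vᴴ = 1 := mul_star_self_eigenvectorUnitary hY
  set lam := hX.eigenvalues with hlamdef
  set mu := hY.eigenvalues with hmudef
  have hXc : X = cD U lam := spectral X hX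
  have hYc : Y = cD V mu := spectral Y hY
  set a : ℝ := ∑ i, max (lam i) 0 with hadef
  set b : ℝ := ∑ i, max (-lam i) 0 with hbdef
  set c : ℝ := ∑ i, max (mu i) 0 with hcdef
  set d : ℝ := ∑ i, max (-mu i) 0 with hddef
  have hlam1 : ∑ i, lam i = 1 := by
    have h1 := hXt
    rw [hXc, cD_trace U hU1] at h1
    exact_mod_cast h1
  have hmu1 : ∑ i, mu i = 1 := by
    have h1 := hYt
    rw [hYc, cD_trace V hV1] at h1
    exact_mod_cast h1
  have hab : a - b = 1 := by
    rw [hadef, hbdef, ← Finset.sum_sub_distrib]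
    rw [← hlam1]
    exact Finset.sum_congr rfl fun i _ => max_zero_sub_max_neg_zero_eq_self _
  have hcd : c - d = 1 := by
    rw [hcdef, hddef, ← Finset.sum_sub_distrib]
    rw [← hmu1]
    exact Finset.sum_congr rfl fun i _ => max_zero_sub_max_neg_zero_eq_self _
  have habs : ∀ x : ℝ, |x| = max x 0 + max (-x) 0 := by
    intro x
    rcases le_total 0 x with hx | hx
    · rw [abs_of_nonneg hx, max_eq_left hx, max_eq_right (neg_nonpos.mpr hx), add_zero]
    · rw [abs_of_nonpos hx, max_eq_right hx, max_eq_left (neg_nonneg.mpr hx), zero_add]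
  have hTX : traceNorm X = a + b := by
    rw [traceNorm_eq_sum_abs X hX, hadef, hbdef, ← Finset.sum_add_distrib]
    exact Finset.sum_congr rfl fun i _ => habs _
  have hTY : traceNorm Y = c + d := by
    rw [traceNorm_eq_sum_abs Y hY, hcdef, hddef, ← Finset.sum_add_distrib]
    exact Finset.sum_congr rfl fun i _ => habs _
  have hb0 : 0 ≤ b := Finset.sum_nonneg fun i _ => le_max_right _ _
  have hd0 : 0 ≤ d := Finset.sum_nonneg fun i _ => le_max_right _ _
  have hdb : d ≤ b := by
    rw [hTX, hTY] at h
    linarith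
  have hc1 : (1 : ℝ) ≤ c := by linarith
  have hc0 : c ≠ 0 := by linarith
  set gA : Fin k → ℝ := fun i => max (mu i) 0 / c with hgAdef
  have hgA0 : ∀ i, 0 ≤ gA i := fun i => div_nonneg (le_max_right _ _) (by linarith)
  have hgAsum : ∑ i, gA i = 1 := by
    rw [hgAdef, ← Finset.sum_div, ← hcdef, div_self hc0]
  obtain ⟨gB, hgB0, hgBsum, hkey⟩ :
      ∃ gB : Fin k → ℝ, (∀ i, 0 ≤ gB i) ∧ (∑ i, gB i = 1) ∧
        (∀ i, a * gA i + (-b) * gB i = mu i) := by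
    by_cases hbz : b = 0
    · refine ⟨gA, hgA0, hgAsum, fun i => ?_⟩
      have hd0' : d = 0 := le_antisymm (hbz ▸ hdb) hd0
      have hmuNN : 0 ≤ mu i := by
        have hz : max (-mu i) 0 = 0 :=
          (Finset.sum_eq_zero_iff_of_nonneg fun j _ => le_max_right _ _).mp hd0' i
            (Finset.mem_univ i)
        have := le_max_left (-mu i) 0
        rw [hz] at this
        linarith
      have hcone : c = 1 := by linarith
      have haone : a = 1 := by linarith
      rw [hbz, haone, hgAdef]
      simp only [hcone, div_one, neg_zero, zero_mul, add_zero, one_mul]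
      exact max_eq_left hmuNN
    · have hbpos : 0 < b := lt_of_le_of_ne hb0 (Ne.symm hbz)
      have hbd0 : 0 ≤ (b - d) / c := div_nonneg (by linarith) (by linarith)
      refine ⟨fun i => (max (-mu i) 0 + ((b - d) / c) * max (mu i) 0) / b, fun i => ?_, ?_, fun i => ?_⟩
      · exact div_nonneg (add_nonneg (le_max_right _ _) (mul_nonneg hbd0 (le_max_right _ _))) hb0
      · rw [← Finset.sum_div, Finset.sum_add_distrib, ← Finset.mul_sum, ← hddef, ← hcdef]
        field_simp
        ring
      · have hacd : a - (b - d) = c := by linarith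
        rcases le_total 0 (mu i) with hmi | hmi
        · rw [hgAdef]
          simp only [max_eq_left hmi, max_eq_right (neg_nonpos.mpr hmi), zero_add]
          rw [neg_mul, mul_comm b, div_mul_cancel₀ _ hbz]
          field_simp
          linear_combination mu i * hacd
        · rw [hgAdef]
          simp only [max_eq_right hmi, max_eq_left (neg_nonneg.mpr hmi), mul_zero, add_zero,
            zero_div, mul_zero, zero_add]
          rw [neg_mul, mul_comm b, div_mul_cancel₀ _ hbz]
          ring
  -- the diagonal indicator functions
  set indP : Fin m → ℝ := fun i => if 0 ≤ lam i then 1 else 0 with hindP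
  set indM : Fin m → ℝ := fun i => if 0 ≤ lam i then 0 else 1 with hindM
  have hindP0 : ∀ i, 0 ≤ indP i := fun i => by rw [hindP]; dsimp only; split <;> norm_num
  have hindM0 : ∀ i, 0 ≤ indM i := fun i => by rw [hindM]; dsimp only; split <;> norm_num
  set Ep := cD U indP with hEp
  set Em := cD U indM with hEm
  set A := cD V gA with hA
  set B := cD V gB with hB
  refine ⟨{ toFun := fun M => (Ep * M).trace • A + (Em * M).trace • B,
            map_add' := fun M N => by
              simp only [Matrix.mul_add, Matrix.trace_add, add_smul]
              abel,
            map_smul' := fun r M => by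
              simp only [Matrix.mul_smul, Matrix.trace_smul, smul_smul, smul_add,
                smul_eq_mul, RingHom.id_apply] }, ?_, ?_, ?_⟩
  · -- completely positive
    set SA := V * Matrix.diagonal (fun i => (Real.sqrt (gA i) : ℂ)) with hSA
    set SB := V * Matrix.diagonal (fun i => (Real.sqrt (gB i) : ℂ)) with hSB
    set Cp := (U * Matrix.diagonal (fun i => (Real.sqrt (indP i) : ℂ)))ᴴ with hCp
    set Cm := (U * Matrix.diagonal (fun i => (Real.sqrt (indM i) : ℂ)))ᴴ with hCm
    have hArw : A = SA * SAᴴ := cD_sqrt V gA hgA0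
    have hBrw : B = SB * SBᴴ := cD_sqrt V gB hgB0
    have hEprw : Ep = Cpᴴ * Cp := by
      rw [hCp, Matrix.conjTranspose_conjTranspose]
      exact cD_sqrt U indP hindP0
    have hEmrw : Em = Cmᴴ * Cm := by
      rw [hCm, Matrix.conjTranspose_conjTranspose]
      exact cD_sqrt U indM hindM0
    have hfun : (fun M : Matrix (Fin m) (Fin m) ℂ =>
        (Ep * M).trace • A + (Em * M).trace • B) =
        fun M => ∑ α : (Fin k × Fin m) ⊕ (Fin k × Fin m),
          Sum.elim (kOp SA Cp) (kOp SB Cm) α * M * (Sum.elim (kOp SA Cp) (kOp SB Cm) α)ᴴ := by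
      funext M
      rw [hArw, hBrw, hEprw, hEmrw, trace_smul_eq_kraus, trace_smul_eq_kraus,
        Fintype.sum_sum_type]
      simp only [Sum.elim_inl, Sum.elim_inr]
    show CompletelyPositive (fun M => (Ep * M).trace • A + (Em * M).trace • B)
    rw [hfun]
    exact kraus_CP _
  · -- trace preserving
    intro M
    show ((Ep * M).trace • A + (Em * M).trace • B).trace = M.trace
    rw [Matrix.trace_add, Matrix.trace_smul, Matrix.trace_smul, hA, hB,
      cD_trace V hV1, cD_trace V hV1, hgAsum, hgBsum]
    have hsum : Ep + Em = 1 := by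
      rw [hEp, hEm, cD_add]
      have : indP + indM = fun _ => 1 := by
        funext i
        rw [hindP, hindM]
        simp only [Pi.add_apply]
        split <;> norm_num
      rw [this, cD_one U hU2]
    calc (Ep * M).trace • ((1 : ℝ) : ℂ) + (Em * M).trace • ((1 : ℝ) : ℂ)
        = (Ep * M).trace + (Em * M).trace := by push_cast; simp
      _ = ((Ep + Em) * M).trace := by rw [Matrix.add_mul, Matrix.trace_add]
      _ = M.trace := by rw [hsum, Matrix.one_mul]
  · -- maps X to Y
    show (Ep * X).trace • A + (Em * X).trace • B = Y
    have htrP : (Ep * X).trace = ((a : ℝ) : ℂ) := by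
      rw [hEp, hXc, cD_mul U hU1, cD_trace U hU1]
      norm_cast
      rw [hadef]
      refine Finset.sum_congr rfl fun i _ => ?_
      rw [hindP]
      dsimp only
      split
      · rw [one_mul, max_eq_left ‹0 ≤ lam i›]
      · rw [zero_mul, max_eq_right (le_of_not_ge ‹¬ 0 ≤ lam i›)]
    have htrM : (Em * X).trace = ((-b : ℝ) : ℂ) := by
      rw [hEm, hXc, cD_mul U hU1, cD_trace U hU1]
      norm_cast
      rw [hbdef, ← Finset.sum_neg_distrib]
      refine Finset.sum_congr rfl fun i _ => ?_
      rw [hindM]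
      dsimp only
      split
      · rw [zero_mul, max_eq_right (neg_nonpos.mpr ‹0 ≤ lam i›), neg_zero]
      · rw [one_mul, max_eq_left (neg_nonneg.mpr (le_of_not_ge ‹¬ 0 ≤ lam i›)), neg_neg]
    rw [htrP, htrM, hA, hB, cD_smul, cD_smul, cD_add, hYc]
    refine congrArg (cD V) (funext fun i => ?_)
    have := hkey i
    simp only [Pi.add_apply, Pi.smul_apply, smul_eq_mul]
    linarith [hkey i]

end
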